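/- Every additively thick subset of ℕ is Delta-large: if T ⊆ ℕ contains arbitrarily long intervals, then there exists an infinite set X ⊆ ℕ with Δ(X) = {x' − x : x < x', x, x' ∈ X} ⊆ T. -/
import Mathlib


def AddThick (T : Set ℕ) : Prop := ∀ k : ℕ, ∃ x : ℕ, ∀ i < k, x + i ∈ T

noncomputable def thickSeq (T : Set ℕ) (hT : AddThick T) : ℕ → ℕ
  | 0 => 0
  | n + 1 => (hT (thickSeq T hT n + 2)).choose + 1 + thickSeq T hT n

lemma thickSeq_lt (T : Set ℕ) (hT : AddThick T) (n : ℕ) :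
    thickSeq T hT n < thickSeq T hT (n + 1) := by
  show thickSeq T hT n < (hT (thickSeq T hT n + 2)).choose + 1 + thickSeq T hT n
  omega

lemma thickSeq_mono (T : Set ℕ) (hT : AddThick T) : StrictMono (thickSeq T hT) :=
  strictMono_nat_of_lt_succ (thickSeq_lt T hT)

lemma thickSeq_diff (T : Set ℕ) (hT : AddThick T) {i n : ℕ} (h : i ≤ n) :
    thickSeq T hT (n + 1) - thickSeq T hT i ∈ T := by
  have hmono := (thickSeq_mono T hT).monotone h
  have hspec := (hT (thickSeq T hT n + 2)).choose_spec
  have hx : (hT (thickSeq T hT n + 2)).choose + (1 + (thickSeq T hT n - thickSeq T hT i)) ∈ T :=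
    hspec _ (by omega)
  have : thickSeq T hT (n + 1) - thickSeq T hT i
      = (hT (thickSeq T hT n + 2)).choose + (1 + (thickSeq T hT n - thickSeq T hT i)) := by
    show (hT (thickSeq T hT n + 2)).choose + 1 + thickSeq T hT n - thickSeq T hT i = _
    omega
  rwa [this]

/-- Every additively thick set is Delta-large: it contains all positive differences
of some infinite set `X`. -/
theorem addThick_is_delta_large (T : Set ℕ) (hT : AddThick T) :
    ∃ X : Set ℕ, X.Infinite ∧ ∀ x ∈ X, ∀ y ∈ X, x < y → y - x ∈ T := by
  refine ⟨Set.range (thickSeq T hT),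
    Set.infinite_range_of_injective (thickSeq_mono T hT).injective, ?_⟩
  rintro x ⟨i, rfl⟩ y ⟨j, rfl⟩ hxy
  have hij : i < j := (thickSeq_mono T hT).lt_iff_lt.mp hxy
  obtain ⟨m, rfl⟩ : ∃ m, j = m + 1 := ⟨j - 1, by omega⟩
  exact thickSeq_diff T hT (by omega)
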